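/- Let I ⊆ ℤ² be a finite spread curve (a spread such that p ∈ I implies p + (1,1) ∉ I), with minimal elements z₁, ..., zₙ ordered by increasing y-coordinate. If p ∈ I and p ≠ zᵢ ∨ zᵢ₊₁ for all 1 ≤ i < n, then there exists a unique index i with zᵢ ≤ p. -/

import Mathlib

/-- A subset of a poset is poset-convex. -/
def PosetConvex {α : Type*} [Preorder α] (S : Set α) : Prop :=
  ∀ ⦃x y z : α⦄, x ≤ y → y ≤ z → x ∈ S → z ∈ S → y ∈ S

/-- A subset of a poset is poset-connected: nonempty, and any two of its elements are
joined by a finite zigzag of comparable elements staying in the set. -/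
def PosetConnected {α : Type*} [Preorder α] (S : Set α) : Prop :=
  S.Nonempty ∧ ∀ x ∈ S, ∀ y ∈ S, ∃ (n : ℕ) (c : ℕ → α), c 0 = x ∧ c n = y ∧
    (∀ i ≤ n, c i ∈ S) ∧ ∀ i < n, c i ≤ c (i + 1) ∨ c (i + 1) ≤ c i

/-- **Unique minimum below a point of a finite spread curve avoiding joins of
consecutive minima.**  Let `I ⊆ ℤ²` be a finite spread curve (a spread such that
`p ∈ I` implies `p + (1,1) ∉ I`).  If `p ∈ I` is not the join of any two minima of `I`
that are consecutive in the `y`-ordering, then there is a unique minimal element `z`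
of `I` with `z ≤ p`. -/
theorem stmt7 (I : Set (ℤ × ℤ)) (hfin : I.Finite)
    (hconv : PosetConvex I) (hconn : PosetConnected I)
    (hcurve : ∀ p ∈ I, p + (1, 1) ∉ I)
    (p : ℤ × ℤ) (hp : p ∈ I)
    (hnotjoin : ∀ z z' : ℤ × ℤ, z ∈ I → (∀ w ∈ I, w ≤ z → w = z) →
      z' ∈ I → (∀ w ∈ I, w ≤ z' → w = z') → z.2 < z'.2 →
      (∀ w ∈ I, (∀ v ∈ I, v ≤ w → v = w) → ¬(z.2 < w.2 ∧ w.2 < z'.2)) →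
      p ≠ z ⊔ z') :
    ∃! z : ℤ × ℤ, (z ∈ I ∧ ∀ w ∈ I, w ≤ z → w = z) ∧ z ≤ p := by
    classical
  -- distinct minima below p with z.2 < z'.2 give a contradiction
  have key : ∀ n : ℕ, ∀ z z' : ℤ × ℤ, z ∈ I → (∀ w ∈ I, w ≤ z → w = z) →
      z' ∈ I → (∀ w ∈ I, w ≤ z' → w = z') → z ≤ p → z' ≤ p → z.2 < z'.2 →
      (z'.2 - z.2).toNat ≤ n → False := by
    intro n
    induction n with
    | zero => intro z z' _ _ _ _ _ _ hlt hle; omega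
    | succ n ih =>
      intro z z' hzI hzmin hz'I hz'min hzp hz'p hlt hle
      -- z'.1 < z.1
      have hx : z'.1 < z.1 := by
        by_contra h
        push_neg at h
        have : z ≤ z' := ⟨h, le_of_lt hlt⟩
        have heq := hz'min z hzI this
        rw [heq] at hlt
        exact lt_irrefl _ hlt
      by_cases hw : ∃ w ∈ I, (∀ v ∈ I, v ≤ w → v = w) ∧ z.2 < w.2 ∧ w.2 < z'.2
      · obtain ⟨w, hwI, hwmin, hw1, hw2⟩ := hw
        -- w.1 < z.1, so w ≤ p
        have hwx : w.1 < z.1 := by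
          by_contra h
          push_neg at h
          have : z ≤ w := ⟨h, le_of_lt hw1⟩
          have heq := hwmin z hzI this
          rw [heq] at hw1
          exact lt_irrefl _ hw1
        have hwp : w ≤ p := ⟨le_trans (le_of_lt hwx) hzp.1, le_trans (le_of_lt hw2) hz'p.2⟩
        exact ih z w hzI hzmin hwI hwmin hzp hwp hw1 (by omega)
      · push_neg at hw
        have hne := hnotjoin z z' hzI hzmin hz'I hz'min hlt
          (fun w hwI hwmin hb => absurd hb.2 (not_lt.2 (hw w hwI hwmin hb.1)))
        -- the join is m = (z.1, z'.2)
        have hsup : z ⊔ z' = (z.1, z'.2) := by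
          rw [show z ⊔ z' = (z.1 ⊔ z'.1, z.2 ⊔ z'.2) from rfl,
            sup_eq_left.2 hx.le, sup_eq_right.2 hlt.le]
        rw [hsup] at hne
        have hm1 : z ≤ ((z.1, z'.2) : ℤ × ℤ) := ⟨le_refl _, hlt.le⟩
        have hm2 : ((z.1, z'.2) : ℤ × ℤ) ≤ p := ⟨hzp.1, hz'p.2⟩
        have hmI : ((z.1, z'.2) : ℤ × ℤ) ∈ I := hconv hm1 hm2 hzI hp
        -- p ≥ m strictly
        have hstrict : z.1 < p.1 ∨ z'.2 < p.2 := by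
          rcases lt_or_eq_of_le hzp.1 with h1 | h1
          · exact Or.inl h1
          rcases lt_or_eq_of_le hz'p.2 with h2 | h2
          · exact Or.inr h2
          exact absurd (show p = ((z.1, z'.2) : ℤ × ℤ) from Prod.ext_iff.2 ⟨h1.symm, h2.symm⟩) hne
        rcases hstrict with h1 | h2
        · have ha1 : z ≤ ((z.1, z'.2 - 1) : ℤ × ℤ) := ⟨le_refl _, by omega⟩
          have ha2 : ((z.1, z'.2 - 1) : ℤ × ℤ) ≤ ((z.1, z'.2) : ℤ × ℤ) := ⟨le_refl _, by omega⟩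
          have haI : ((z.1, z'.2 - 1) : ℤ × ℤ) ∈ I := hconv ha1 ha2 hzI hmI
          have hb1 : ((z.1, z'.2) : ℤ × ℤ) ≤ ((z.1 + 1, z'.2) : ℤ × ℤ) := ⟨by omega, le_refl _⟩
          have hb2 : ((z.1 + 1, z'.2) : ℤ × ℤ) ≤ p := ⟨by omega, hz'p.2⟩
          have hbI : ((z.1 + 1, z'.2) : ℤ × ℤ) ∈ I := hconv hb1 hb2 hmI hp
          have he : ((z.1, z'.2 - 1) : ℤ × ℤ) + (1, 1) = ((z.1 + 1, z'.2) : ℤ × ℤ) := by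
            rw [Prod.mk_add_mk]; rw [Prod.mk.injEq]; constructor <;> ring
          exact hcurve _ haI (he ▸ hbI)
        · have ha1 : z' ≤ ((z.1 - 1, z'.2) : ℤ × ℤ) := ⟨by omega, le_refl _⟩
          have ha2 : ((z.1 - 1, z'.2) : ℤ × ℤ) ≤ ((z.1, z'.2) : ℤ × ℤ) := ⟨by omega, le_refl _⟩
          have haI : ((z.1 - 1, z'.2) : ℤ × ℤ) ∈ I := hconv ha1 ha2 hz'I hmI
          have hb1 : ((z.1, z'.2) : ℤ × ℤ) ≤ ((z.1, z'.2 + 1) : ℤ × ℤ) := ⟨le_refl _, by omega⟩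
          have hb2 : ((z.1, z'.2 + 1) : ℤ × ℤ) ≤ p := ⟨hzp.1, by omega⟩
          have hbI : ((z.1, z'.2 + 1) : ℤ × ℤ) ∈ I := hconv hb1 hb2 hmI hp
          have he : ((z.1 - 1, z'.2) : ℤ × ℤ) + (1, 1) = ((z.1, z'.2 + 1) : ℤ × ℤ) := by
            rw [Prod.mk_add_mk]; rw [Prod.mk.injEq]; constructor <;> ring
          exact hcurve _ haI (he ▸ hbI)
  -- existence of a minimal element below p
  obtain ⟨z0, hz0S, hz0min⟩ : ∃ z0 ∈ {w ∈ I | w ≤ p}, ∀ a' ∈ {w ∈ I | w ≤ p}, a' ≤ z0 → z0 = a' := by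
    obtain ⟨a, ha⟩ := Set.Finite.exists_minimal (s := {w ∈ I | w ≤ p})
      (hfin.subset (fun w hw => hw.1)) ⟨p, hp, le_refl p⟩
    exact ⟨a, ha.1, fun b hb hba => le_antisymm (ha.2 hb hba) hba⟩
  have hz0I : z0 ∈ I := hz0S.1
  have hz0p : z0 ≤ p := hz0S.2
  have hz0m : ∀ w ∈ I, w ≤ z0 → w = z0 := by
    intro w hwI hwle
    exact ((hz0min w ⟨hwI, le_trans hwle hz0p⟩ hwle).symm)
  refine ⟨z0, ⟨⟨hz0I, hz0m⟩, hz0p⟩, ?_⟩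
  rintro z ⟨⟨hzI, hzmin⟩, hzp⟩
  by_contra hne
  have hy : z.2 ≠ z0.2 := by
    intro h
    rcases le_total z.1 z0.1 with h1 | h1
    · exact hne (hz0m z hzI ⟨h1, le_of_eq h⟩)
    · exact hne ((hzmin z0 hz0I ⟨h1, ge_of_eq h⟩).symm ▸ rfl)
  rcases lt_or_gt_of_ne hy with h | h
  · exact key (z0.2 - z.2).toNat z z0 hzI hzmin hz0I hz0m hzp hz0p h le_rfl
  · exact key (z.2 - z0.2).toNat z0 z hz0I hz0m hzI hzmin hz0p hzp h le_rfl
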